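/- arXiv:1902.05155 — 2 statements merged into one kernel-verified Lean document; each statement's English description precedes it below -/
import Mathlib

section
/- For natural numbers $q \ge 1$ and integers $a$ with $\gcd(a,q)=1$, define $S(q,a,b) = \sum_{r=1}^q e^{2\pi i (a r^3 + b r)/q}$. Then for every $\varepsilon>0$, $\sum_{b=1}^q |S(q,a,b)|^4 \ll_\varepsilon q^{3+\varepsilon}$. -/
open Complex

/-- `e_q(z) = e^{2πiz/q}`. -/
noncomputable def eq' (q : ℕ) (z : ℤ) : ℂ :=
  Complex.exp (2 * Real.pi * Complex.I * z / q)

/-- The Gauss-Weyl sum `S(q,a,b) = ∑_{r=1}^q e_q(a r³ + b r)`. -/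
noncomputable def Ssum (q : ℕ) (a b : ℤ) : ℂ :=
  ∑ r ∈ Finset.Icc (1 : ℤ) q, eq' q (a * r^3 + b * r)


lemma eq'_add (q : ℕ) (x y : ℤ) : eq' q (x + y) = eq' q x * eq' q y := by
  rw [eq', eq', eq', ← Complex.exp_add]
  congr 1
  push_cast
  ring

lemma eq'_zero (q : ℕ) : eq' q 0 = 1 := by simp [eq']

lemma eq'_congr {q : ℕ} {x y : ℤ} (h : (q : ℤ) ∣ x - y) : eq' q x = eq' q y := by
  rcases Nat.eq_zero_or_pos q with hq | hq
  · subst hq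
    have : x = y := by simpa using Int.eq_of_sub_eq_zero (by simpa using h)
    rw [this]
  obtain ⟨k, hk⟩ := h
  have hx : x = y + q * k := by linarith
  subst hx
  rw [eq', eq']
  have hqne : (q : ℂ) ≠ 0 := Nat.cast_ne_zero.mpr (by omega)
  have : (2 * Real.pi * Complex.I * ((y : ℂ) + q * k)) / q
      = 2 * Real.pi * Complex.I * (y : ℂ) / q + k * (2 * Real.pi * Complex.I) := by
    field_simp
  push_cast
  rw [this, Complex.exp_add, Complex.exp_int_mul_two_pi_mul_I, mul_one]

lemma norm_eq' (q : ℕ) (x : ℤ) : ‖eq' q x‖ = 1 := by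
  have : (2 * Real.pi * Complex.I * (x : ℂ)) / q
      = ((2 * Real.pi * x / q : ℝ) : ℂ) * Complex.I := by
    push_cast
    ring
  rw [eq', this, Complex.norm_exp_ofReal_mul_I]

lemma eq'_zpow (q : ℕ) (b m : ℤ) : eq' q (b * m) = eq' q m ^ b := by
  rw [eq', eq', ← Complex.exp_int_mul]
  congr 1
  push_cast
  ring

lemma eq'_eq_one_iff {q : ℕ} (hq : 1 ≤ q) (m : ℤ) : eq' q m = 1 ↔ (q : ℤ) ∣ m := by
  have hqR : (q : ℝ) ≠ 0 := by positivity
  constructor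
  · intro h
    rw [eq', Complex.exp_eq_one_iff] at h
    obtain ⟨n, hn⟩ := h
    have hpi : (2 * (Real.pi:ℂ) * Complex.I) ≠ 0 :=
      mul_ne_zero (mul_ne_zero two_ne_zero (by exact_mod_cast Real.pi_ne_zero)) Complex.I_ne_zero
    have hqC : (q : ℂ) ≠ 0 := by exact_mod_cast hqR
    have : (m : ℂ) = n * q := by
      rw [div_eq_iff hqC] at hn
      have h2 : (2 * (Real.pi : ℂ) * Complex.I) * m = (2 * (Real.pi : ℂ) * Complex.I) * (n * q) := by
        linear_combination hn
      exact mul_left_cancel₀ hpi h2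
    have : m = n * q := by exact_mod_cast this
    exact ⟨n, by linarith⟩
  · rintro ⟨k, rfl⟩
    rw [eq']
    have : (2 * Real.pi * Complex.I * ((q : ℂ) * k)) / q = k * (2 * Real.pi * Complex.I) := by
      have hqC : (q : ℂ) ≠ 0 := by exact_mod_cast hqR
      field_simp
    push_cast
    rw [this, Complex.exp_int_mul_two_pi_mul_I]

/-- Orthogonality. -/
lemma sum_eq'_mul (q : ℕ) (hq : 1 ≤ q) (m : ℤ) :
    ∑ b ∈ Finset.Icc (1 : ℤ) q, eq' q (b * m) = if (q : ℤ) ∣ m then (q : ℂ) else 0 := by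
  by_cases h : (q : ℤ) ∣ m
  · simp only [h, if_true]
    have : ∀ b ∈ Finset.Icc (1 : ℤ) q, eq' q (b * m) = 1 := by
      intro b _
      rw [(eq'_eq_one_iff hq _).mpr (Dvd.dvd.mul_left h b)]
    rw [Finset.sum_congr rfl this, Finset.sum_const, Int.card_Icc]
    simp
  · simp only [h, if_false]
    set ζ := eq' q m with hζ
    have hsum : ∑ b ∈ Finset.Icc (1 : ℤ) q, eq' q (b * m) = ∑ b ∈ Finset.Icc (1 : ℤ) q, ζ ^ b := by
      exact Finset.sum_congr rfl fun b _ => eq'_zpow q b m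
    have hζq : ζ ^ (q : ℤ) = 1 := by
      rw [← eq'_zpow]
      exact (eq'_eq_one_iff hq _).mpr ⟨m, by ring⟩
    have hζ1 : ζ ≠ 1 := fun hc => h ((eq'_eq_one_iff hq m).mp hc)
    -- geometric sum over Icc 1 q
    have hnat : ∑ b ∈ Finset.Icc (1 : ℤ) q, ζ ^ b = ζ * ∑ i ∈ Finset.range q, ζ ^ i := by
      rw [Finset.mul_sum]
      refine Finset.sum_nbij' (fun b => (b - 1).toNat) (fun i => (i : ℤ) + 1) ?_ ?_ ?_ ?_ ?_
      · intro b hb; simp only [Finset.mem_Icc] at hb; simp; omega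
      · intro i hi; simp only [Finset.mem_range] at hi; simp [Finset.mem_Icc]; omega
      · intro b hb; simp only [Finset.mem_Icc] at hb; simp; omega
      · intro i hi; simp
      · intro b hb
        simp only [Finset.mem_Icc] at hb
        have : ζ ^ b = ζ ^ ((b - 1).toNat + 1 : ℤ) := by congr 1; omega
        rw [this, zpow_add₀, zpow_natCast, zpow_one, mul_comm]
        intro hc
        rw [hζ] at hc
        exact (Complex.exp_ne_zero _) hc
    rw [hsum, hnat, geom_sum_eq hζ1]
    have : ζ ^ q - 1 = 0 := by
      rw [← zpow_natCast, hζq, sub_self]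
    rw [this]
    simp

lemma conj_eq' (q : ℕ) (x : ℤ) : (starRingEnd ℂ) (eq' q x) = eq' q (-x) := by
  rw [eq', eq', ← Complex.exp_conj]
  congr 1
  simp [map_div₀, map_mul, Complex.conj_I, map_ofNat]

/-- Sum of a `q`-periodic function over any window of length `q`. -/
lemma periodic_sum_shift (q : ℕ) (h : ℤ → ℂ) (hper : ∀ x, h (x + q) = h x) :
    ∀ c : ℤ, ∑ x ∈ Finset.Icc (c + 1) (c + q), h x = ∑ x ∈ Finset.Icc (1 : ℤ) q, h x := by
  have step : ∀ c : ℤ, ∑ x ∈ Finset.Icc (c + 1) (c + q), h x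
      = ∑ x ∈ Finset.Icc (c + 2) (c + q + 1), h x := by
    intro c
    rcases Nat.eq_zero_or_pos q with hq | hq
    · subst hq
      have e0 : Finset.Icc (c+1) (c+(0:ℕ)) = (∅ : Finset ℤ) := by
        apply Finset.Icc_eq_empty; simp
      have e0' : Finset.Icc (c+2) (c+(0:ℕ)+1) = (∅ : Finset ℤ) := by
        apply Finset.Icc_eq_empty; simp
      rw [e0, e0']
    have e1 : Finset.Icc (c + 1) (c + q) = insert (c + 1) (Finset.Icc (c + 2) (c + q)) := by
      ext x; simp [Finset.mem_Icc]; omega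
    have e2 : Finset.Icc (c + 2) (c + q + 1) = insert (c + q + 1) (Finset.Icc (c + 2) (c + q)) := by
      ext x; simp [Finset.mem_Icc]; omega
    rw [e1, e2, Finset.sum_insert (by simp [Finset.mem_Icc]),
      Finset.sum_insert (by simp [Finset.mem_Icc]),
      show c + (q:ℤ) + 1 = (c + 1) + q by ring, hper]
  intro c
  induction c using Int.induction_on with
  | zero => norm_num
  | succ n ih =>
    rw [show (n:ℤ)+1+1 = n+2 by ring, show (n:ℤ)+1+(q:ℤ) = n+q+1 by ring, ← step, ih]
  | pred n ih =>
    rw [← ih, step, show -(n:ℤ)-1+2 = -n+1 by ring, show -(n:ℤ)-1+(q:ℤ)+1 = -n+q by ring]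

/-- The set of elements of `Icc 1 q` in a given residue class is a singleton. -/
lemma filter_residue_eq (q : ℕ) (hq : 1 ≤ q) (c : ℤ) :
    (Finset.Icc (1 : ℤ) q).filter (fun r => (q : ℤ) ∣ c - r) = {(c - 1) % q + 1} := by
  have hq0 : (0 : ℤ) < q := by exact_mod_cast hq
  ext r
  simp only [Finset.mem_filter, Finset.mem_Icc, Finset.mem_singleton]
  constructor
  · rintro ⟨⟨h1, h2⟩, k, hk⟩
    have hmod := Int.emod_emod_of_dvd (c-1) (dvd_refl (q:ℤ))
    have : (c - 1) % q = (r - 1) % q := by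
      conv_lhs => rw [show c - 1 = (r - 1) + q * k by linarith]
      rw [Int.add_mul_emod_self_left]
    rw [this, Int.emod_eq_of_lt (by omega) (by omega)]
    omega
  · rintro rfl
    have h1 := Int.emod_nonneg (c-1) (by omega : (q:ℤ) ≠ 0)
    have h2 := Int.emod_lt_of_pos (c-1) hq0
    refine ⟨⟨by omega, by omega⟩, ?_⟩
    have := Int.emod_add_mul_ediv (c-1) q
    exact ⟨(c-1)/q, by linarith⟩
/-- Number of multiples of `m` in `[1,q]`. -/
lemma card_multiples_le (q : ℕ) (m : ℤ) (hm : 1 ≤ m) :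
    ((Finset.Icc (1 : ℤ) q).filter (fun v => m ∣ v)).card ≤ ((q : ℤ) / m).toNat := by
  have hsub : ((Finset.Icc (1 : ℤ) q).filter (fun v => m ∣ v))
      ⊆ (Finset.Icc (1 : ℤ) ((q : ℤ)/m)).image (· * m) := by
    intro v hv
    simp only [Finset.mem_filter, Finset.mem_Icc] at hv
    obtain ⟨⟨h1, h2⟩, k, hk⟩ := hv
    simp only [Finset.mem_image, Finset.mem_Icc]
    refine ⟨k, ⟨?_, ?_⟩, by rw [hk]; ring⟩
    · nlinarith
    · rw [Int.le_ediv_iff_mul_le (by omega)]; nlinarith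
  calc ((Finset.Icc (1 : ℤ) q).filter (fun v => m ∣ v)).card
      ≤ ((Finset.Icc (1 : ℤ) ((q : ℤ)/m)).image (· * m)).card := Finset.card_le_card hsub
    _ ≤ (Finset.Icc (1 : ℤ) ((q : ℤ)/m)).card := Finset.card_image_le
    _ = ((q : ℤ)/m + 1 - 1).toNat := Int.card_Icc _ _
    _ = ((q : ℤ)/m).toNat := by congr 1; ring

lemma card_filter_dvd_le (q : ℕ) (hq : 1 ≤ q) (u : ℤ) :
    ((Finset.Icc (1 : ℤ) q).filter (fun v => (q : ℤ) ∣ 6 * u * v)).card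
      ≤ 6 * Int.gcd u q := by
  set g : ℕ := Int.gcd (6 * u) q with hg
  have hg0 : 0 < g := Int.gcd_pos_of_ne_zero_right _ (by exact_mod_cast by omega : (q:ℤ) ≠ 0)
  have hgq : (g : ℤ) ∣ (q : ℤ) := Int.gcd_dvd_right _ _
  have hgu : (g : ℤ) ∣ 6 * u := Int.gcd_dvd_left _ _
  set m : ℤ := (q : ℤ) / g with hm
  have hmg : m * g = q := Int.ediv_mul_cancel hgq
  have hm1 : 1 ≤ m := by nlinarith [hg0, hq]
  have key : ∀ v : ℤ, (q : ℤ) ∣ 6 * u * v → m ∣ v := by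
    intro v hv
    obtain ⟨u', hu'⟩ := hgu
    have hco : IsCoprime (6 * u / g) m := by
      rw [Int.isCoprime_iff_gcd_eq_one, hm]
      exact Int.gcd_div_gcd_div_gcd (by exact_mod_cast hg0)
    have hu'' : 6 * u / g = u' := by
      rw [hu']; exact Int.mul_ediv_cancel_left _ (by exact_mod_cast hg0.ne')
    have hmd : m ∣ u' * v := by
      rcases hv with ⟨w, hw⟩
      refine ⟨w, ?_⟩
      have h3 : (g:ℤ) * (u' * v) = (g:ℤ) * (m * w) := by
        rw [← mul_assoc, ← hu', show (g:ℤ) * (m*w) = (m * g) * w by ring, hmg]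
        exact hw
      exact mul_left_cancel₀ (by exact_mod_cast hg0.ne') h3
    rw [← hu''] at hmd
    exact hco.symm.dvd_of_dvd_mul_left hmd
  have hsub : ((Finset.Icc (1 : ℤ) q).filter (fun v => (q : ℤ) ∣ 6 * u * v))
      ⊆ (Finset.Icc (1 : ℤ) q).filter (fun v => m ∣ v) := by
    intro v hv
    simp only [Finset.mem_filter] at hv ⊢
    exact ⟨hv.1, key v hv.2⟩
  have hqm : ((q : ℤ) / m).toNat = g := by
    have : (q : ℤ) / m = g := by
      rw [show (q:ℤ) = m * g by rw [hmg]]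
      exact Int.mul_ediv_cancel_left _ (by omega)
    rw [this]; simp
  have hgle : g ≤ 6 * Int.gcd u q := by
    have hdvd : (g : ℤ) ∣ (Int.gcd (6 * u) (6 * (q:ℤ)) : ℤ) :=
      Int.dvd_coe_gcd hgu (Dvd.dvd.mul_left hgq 6)
    rw [Int.gcd_mul_left] at hdvd
    have : g ∣ 6 * Int.gcd u q := by exact_mod_cast hdvd
    refine Nat.le_of_dvd ?_ this
    have : 0 < Int.gcd u q := Int.gcd_pos_of_ne_zero_right _ (by exact_mod_cast by omega : (q:ℤ) ≠ 0)
    omega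
  calc ((Finset.Icc (1 : ℤ) q).filter (fun v => (q : ℤ) ∣ 6 * u * v)).card
      ≤ ((Finset.Icc (1 : ℤ) q).filter (fun v => m ∣ v)).card := Finset.card_le_card hsub
    _ ≤ ((q : ℤ) / m).toNat := card_multiples_le q m hm1
    _ = g := hqm
    _ ≤ 6 * Int.gcd u q := hgle

/-- Gcd sum bound. -/
lemma sum_gcd_le (q : ℕ) (hq : 1 ≤ q) :
    ∑ u ∈ Finset.Icc 1 q, Nat.gcd u q ≤ q * q.divisors.card := by
  have h1 : ∀ u ∈ Finset.Icc 1 q, Nat.gcd u q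
      = ∑ d ∈ q.divisors, if Nat.gcd u q = d then d else 0 := by
    intro u hu
    simp only [Finset.mem_Icc] at hu
    have hmem : Nat.gcd u q ∈ q.divisors :=
      Nat.mem_divisors.mpr ⟨Nat.gcd_dvd_right _ _, by omega⟩
    have hs := Finset.sum_ite_eq q.divisors (Nat.gcd u q) (fun d => d)
    simp only [if_pos hmem] at hs
    rw [hs]
  rw [Finset.sum_congr rfl h1, Finset.sum_comm]
  have h2 : ∀ d ∈ q.divisors,
      (∑ u ∈ Finset.Icc 1 q, if Nat.gcd u q = d then d else 0) ≤ q := by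
    intro d hd
    obtain ⟨hdq, hq0⟩ := Nat.mem_divisors.mp hd
    have hd0 : 0 < d := Nat.pos_of_dvd_of_pos hdq (by omega)
    calc (∑ u ∈ Finset.Icc 1 q, if Nat.gcd u q = d then d else 0)
        ≤ ∑ u ∈ Finset.Icc 1 q, if d ∣ u then d else 0 := by
          apply Finset.sum_le_sum
          intro u hu
          by_cases h : Nat.gcd u q = d
          · rw [if_pos h, if_pos (h ▸ Nat.gcd_dvd_left u q)]
          · rw [if_neg h]; exact Nat.zero_le _
      _ = ((Finset.Icc 1 q).filter (fun u => d ∣ u)).card * d := by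
          rw [Finset.sum_ite, Finset.sum_const, Finset.sum_const_zero, add_zero, smul_eq_mul]
      _ = ((Finset.Ioc 0 q).filter (fun u => d ∣ u)).card * d := by
          have hIcc : Finset.Icc 1 q = Finset.Ioc 0 q := by
            ext x; simp only [Finset.mem_Icc, Finset.mem_Ioc]; omega
          rw [hIcc]
      _ = (q / d) * d := by rw [Nat.Ioc_filter_dvd_card_eq_div]
      _ ≤ q := Nat.div_mul_le_self q d
  calc ∑ d ∈ q.divisors, (∑ u ∈ Finset.Icc 1 q, if Nat.gcd u q = d then d else 0)
      ≤ ∑ _d ∈ q.divisors, q := Finset.sum_le_sum h2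
    _ = q.divisors.card * q := by rw [Finset.sum_const, smul_eq_mul]
    _ = q * q.divisors.card := by ring

/-- Divisor bound: `d(q) ≪_ε q^ε`. -/
lemma card_divisors_le (ε : ℝ) (hε : 0 < ε) :
    ∃ C : ℝ, 1 ≤ C ∧ ∀ q : ℕ, 1 ≤ q → (q.divisors.card : ℝ) ≤ C * (q : ℝ) ^ ε := by
  have hlog2 : (0:ℝ) < Real.log 2 := Real.log_pos (by norm_num)
  set B : ℝ := max 1 (1 / (ε * Real.log 2)) with hB
  have hB1 : (1:ℝ) ≤ B := le_max_left _ _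
  have hB2 : 1 ≤ B * (ε * Real.log 2) := by
    have h := le_max_right 1 (1 / (ε * Real.log 2))
    have hpos : 0 < ε * Real.log 2 := by positivity
    calc (1:ℝ) = (1 / (ε * Real.log 2)) * (ε * Real.log 2) := by field_simp
      _ ≤ B * (ε * Real.log 2) := mul_le_mul_of_nonneg_right h (le_of_lt hpos)
  set T : ℕ := ⌈(2:ℝ) ^ (1/ε)⌉₊ with hT
  refine ⟨B ^ T, ?_, ?_⟩
  · calc (1:ℝ) = 1 ^ T := (one_pow T).symm
      _ ≤ B ^ T := pow_le_pow_left₀ (by norm_num) hB1 T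
  intro q hq
  have hq0 : q ≠ 0 := by omega
  -- termwise bounds
  have term_gen : ∀ p a : ℕ, 2 ≤ p →
      ((a:ℝ) + 1) ≤ B * (((p:ℝ) ^ a) ^ ε) := by
    intro p a hp
    have hp0 : (0:ℝ) < p := by positivity
    have h1 : ((p:ℝ) ^ a) ^ ε = (p:ℝ) ^ ((a:ℝ) * ε) := by
      rw [← Real.rpow_natCast (p:ℝ) a, ← Real.rpow_mul (le_of_lt hp0)]
    have h2 : (2:ℝ) ^ ((a:ℝ) * ε) ≤ (p:ℝ) ^ ((a:ℝ) * ε) :=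
      Real.rpow_le_rpow (by norm_num) (by exact_mod_cast hp) (by positivity)
    have h3 : 1 + (a:ℝ) * ε * Real.log 2 ≤ (2:ℝ) ^ ((a:ℝ) * ε) := by
      rw [Real.rpow_def_of_pos (by norm_num)]
      have := Real.add_one_le_exp (Real.log 2 * ((a:ℝ) * ε))
      calc 1 + (a:ℝ) * ε * Real.log 2 = Real.log 2 * ((a:ℝ)*ε) + 1 := by ring
        _ ≤ Real.exp (Real.log 2 * ((a:ℝ)*ε)) := this
    have h4 : ((a:ℝ) + 1) ≤ B * (1 + (a:ℝ) * ε * Real.log 2) := by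
      have ha : (0:ℝ) ≤ a := by positivity
      nlinarith
    rw [h1]
    calc ((a:ℝ) + 1) ≤ B * (1 + (a:ℝ) * ε * Real.log 2) := h4
      _ ≤ B * ((2:ℝ) ^ ((a:ℝ) * ε)) := by
          apply mul_le_mul_of_nonneg_left h3 (by linarith)
      _ ≤ B * ((p:ℝ) ^ ((a:ℝ) * ε)) := mul_le_mul_of_nonneg_left h2 (by linarith)
  have term_large : ∀ p a : ℕ, 2 ≤ p → (2:ℝ) ^ (1/ε) ≤ (p:ℝ) →
      ((a:ℝ) + 1) ≤ ((p:ℝ) ^ a) ^ ε := by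
    intro p a hp hlarge
    have hp0 : (0:ℝ) < p := by positivity
    have hpe : (2:ℝ) ≤ (p:ℝ) ^ ε := by
      have := Real.rpow_le_rpow (by positivity) hlarge (le_of_lt hε)
      rwa [← Real.rpow_mul (by norm_num), one_div, inv_mul_cancel₀ hε.ne', Real.rpow_one] at this
    have h1 : ((p:ℝ) ^ a) ^ ε = ((p:ℝ) ^ ε) ^ a := by
      rw [← Real.rpow_natCast (p:ℝ) a, ← Real.rpow_mul (le_of_lt hp0),
        ← Real.rpow_natCast ((p:ℝ) ^ ε) a, ← Real.rpow_mul (le_of_lt hp0), mul_comm]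
    rw [h1]
    calc ((a:ℝ) + 1) ≤ (2:ℝ) ^ a := by
          have := Nat.lt_two_pow_self (n := a)
          have : (a:ℝ) + 1 ≤ ((2:ℕ) ^ a : ℕ) := by exact_mod_cast this
          simpa using this
      _ ≤ ((p:ℝ) ^ ε) ^ a := pow_le_pow_left₀ (by norm_num) hpe a
  -- the product formula
  have hd : (q.divisors.card : ℝ)
      = ∏ p ∈ q.primeFactors, ((q.factorization p : ℝ) + 1) := by
    rw [Nat.card_divisors hq0]
    push_cast
    rfl
  have hqprod : (q:ℝ) = ∏ p ∈ q.primeFactors, (p:ℝ) ^ (q.factorization p) := by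
    conv_lhs => rw [← Nat.factorization_prod_pow_eq_self hq0]
    unfold Finsupp.prod
    rw [Nat.support_factorization]
    push_cast
    rfl
  have hqe : (q:ℝ) ^ ε = ∏ p ∈ q.primeFactors, ((p:ℝ) ^ (q.factorization p)) ^ ε := by
    rw [hqprod, ← Real.finset_prod_rpow _ _ (fun p _ => by positivity) ε]
  -- compare products
  have hcomp : ∏ p ∈ q.primeFactors, ((q.factorization p : ℝ) + 1)
      ≤ ∏ p ∈ q.primeFactors,
          ((if (p:ℝ) < (2:ℝ) ^ (1/ε) then B else 1) * ((p:ℝ) ^ (q.factorization p)) ^ ε) := by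
    apply Finset.prod_le_prod
    · intro p _; positivity
    · intro p hp
      have hp2 : 2 ≤ p := (Nat.prime_of_mem_primeFactors hp).two_le
      by_cases hsmall : (p:ℝ) < (2:ℝ) ^ (1/ε)
      · rw [if_pos hsmall]; exact term_gen p _ hp2
      · rw [if_neg hsmall, one_mul]
        exact term_large p _ hp2 (le_of_not_gt hsmall)
  have hsplit : ∏ p ∈ q.primeFactors,
        ((if (p:ℝ) < (2:ℝ) ^ (1/ε) then B else 1) * ((p:ℝ) ^ (q.factorization p)) ^ ε)
      = (∏ p ∈ q.primeFactors, (if (p:ℝ) < (2:ℝ) ^ (1/ε) then B else 1))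
        * ∏ p ∈ q.primeFactors, ((p:ℝ) ^ (q.factorization p)) ^ ε :=
    Finset.prod_mul_distrib
  have hBprod : (∏ p ∈ q.primeFactors, (if (p:ℝ) < (2:ℝ) ^ (1/ε) then B else 1)) ≤ B ^ T := by
    rw [Finset.prod_ite, Finset.prod_const, Finset.prod_const, one_pow, mul_one]
    apply pow_le_pow_right₀ hB1
    refine le_trans (Finset.card_le_card (fun p hp => ?_)) (le_of_eq (Finset.card_range T))
    simp only [Finset.mem_filter] at hp
    simp only [Finset.mem_range]
    have : (p:ℝ) < T := lt_of_lt_of_le hp.2 (Nat.le_ceil _)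
    exact_mod_cast this
  calc (q.divisors.card : ℝ)
      = ∏ p ∈ q.primeFactors, ((q.factorization p : ℝ) + 1) := hd
    _ ≤ _ := hcomp
    _ = _ * _ := hsplit
    _ ≤ B ^ T * ∏ p ∈ q.primeFactors, ((p:ℝ) ^ (q.factorization p)) ^ ε := by
        apply mul_le_mul_of_nonneg_right hBprod
        apply Finset.prod_nonneg
        intro p _; positivity
    _ = B ^ T * (q:ℝ) ^ ε := by rw [hqe]

open Finset in
/-- Step A: expansion of the fourth power. -/
lemma normS_pow_four (q : ℕ) (a b : ℤ) :
    ((‖Ssum q a b‖^4 : ℝ) : ℂ)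
      = ∑ r1 ∈ Finset.Icc (1:ℤ) q, ∑ r2 ∈ Finset.Icc (1:ℤ) q, ∑ r3 ∈ Finset.Icc (1:ℤ) q,
          ∑ r4 ∈ Finset.Icc (1:ℤ) q,
          eq' q (a*(r1^3+r2^3-r3^3-r4^3) + b*(r1+r2-r3-r4)) := by
  set N := Finset.Icc (1:ℤ) q
  set S := Ssum q a b with hS
  have h1 : ((‖S‖^4 : ℝ) : ℂ) = (S * (starRingEnd ℂ) S) * (S * (starRingEnd ℂ) S) := by
    rw [Complex.mul_conj]
    push_cast
    rw [Complex.normSq_eq_norm_sq]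
    push_cast
    ring
  have h2 : S * (starRingEnd ℂ) S
      = ∑ x ∈ N, ∑ y ∈ N, eq' q (a*x^3 + b*x) * eq' q (-(a*y^3 + b*y)) := by
    rw [hS, Ssum, map_sum, Finset.sum_mul_sum]
    exact Finset.sum_congr rfl fun x _ => Finset.sum_congr rfl fun y _ => by
      rw [conj_eq']
  rw [h1, h2, Finset.sum_mul_sum]
  refine Finset.sum_congr rfl fun r1 _ => Finset.sum_congr rfl fun r2 _ => ?_
  rw [Finset.sum_mul_sum]
  refine Finset.sum_congr rfl fun r3 _ => Finset.sum_congr rfl fun r4 _ => ?_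
  rw [← eq'_add, ← eq'_add, ← eq'_add]
  congr 1
  ring

/-- Step B+C: summing over `b`. -/
lemma sum_b_eq (q : ℕ) (hq : 1 ≤ q) (a : ℤ) :
    ∑ b ∈ Finset.Icc (1:ℤ) q, ((‖Ssum q a b‖^4 : ℝ) : ℂ)
      = (q:ℂ) * ∑ r1 ∈ Finset.Icc (1:ℤ) q, ∑ r2 ∈ Finset.Icc (1:ℤ) q,
          ∑ r3 ∈ Finset.Icc (1:ℤ) q, eq' q ((-3)*a*(r1-r3)*(r2-r3)*(r1+r2)) := by
  set N := Finset.Icc (1:ℤ) q with hN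
  have stepC : ∀ r1 ∈ N, ∀ r2 ∈ N, ∀ r3 ∈ N,
      ∑ r4 ∈ N, ∑ b ∈ N, eq' q (a*(r1^3+r2^3-r3^3-r4^3) + b*(r1+r2-r3-r4))
        = (q:ℂ) * eq' q ((-3)*a*(r1-r3)*(r2-r3)*(r1+r2)) := by
    intro r1 _ r2 _ r3 _
    have inner : ∀ r4 ∈ N, ∑ b ∈ N, eq' q (a*(r1^3+r2^3-r3^3-r4^3) + b*(r1+r2-r3-r4))
        = if (q:ℤ) ∣ r1+r2-r3-r4 then (q:ℂ) * eq' q ((-3)*a*(r1-r3)*(r2-r3)*(r1+r2)) else 0 := by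
      intro r4 _
      have e1 : ∀ b ∈ N, eq' q (a*(r1^3+r2^3-r3^3-r4^3) + b*(r1+r2-r3-r4))
          = eq' q (a*(r1^3+r2^3-r3^3-r4^3)) * eq' q (b*(r1+r2-r3-r4)) :=
        fun b _ => eq'_add q _ _
      rw [Finset.sum_congr rfl e1, ← Finset.mul_sum, hN, sum_eq'_mul q hq _]
      by_cases h : (q:ℤ) ∣ r1+r2-r3-r4
      · rw [if_pos h, if_pos h]
        obtain ⟨k, hk⟩ := h
        have hcong : eq' q (a*(r1^3+r2^3-r3^3-r4^3)) = eq' q ((-3)*a*(r1-r3)*(r2-r3)*(r1+r2)) := by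
          apply eq'_congr
          refine ⟨a*k*((r1+r2-r3)^2+(r1+r2-r3)*r4+r4^2), ?_⟩
          linear_combination (a*((r1+r2-r3)^2+(r1+r2-r3)*r4+r4^2)) * hk
        rw [hcong]; ring
      · rw [if_neg h, if_neg h, mul_zero]
    rw [Finset.sum_congr rfl inner, ← Finset.sum_filter, hN,
      filter_residue_eq q hq (r1+r2-r3), Finset.sum_singleton]
  have swap : ∀ f : ℤ→ℤ→ℤ→ℤ→ℤ→ℂ,
      (∑ b ∈ N, ∑ r1 ∈ N, ∑ r2 ∈ N, ∑ r3 ∈ N, ∑ r4 ∈ N, f b r1 r2 r3 r4)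
        = ∑ r1 ∈ N, ∑ r2 ∈ N, ∑ r3 ∈ N, ∑ r4 ∈ N, ∑ b ∈ N, f b r1 r2 r3 r4 := by
    intro f
    rw [Finset.sum_comm]
    refine Finset.sum_congr rfl fun r1 _ => ?_
    rw [Finset.sum_comm]
    refine Finset.sum_congr rfl fun r2 _ => ?_
    rw [Finset.sum_comm]
    refine Finset.sum_congr rfl fun r3 _ => ?_
    exact Finset.sum_comm
  calc ∑ b ∈ N, ((‖Ssum q a b‖^4 : ℝ) : ℂ)
      = ∑ b ∈ N, ∑ r1 ∈ N, ∑ r2 ∈ N, ∑ r3 ∈ N, ∑ r4 ∈ N,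
          eq' q (a*(r1^3+r2^3-r3^3-r4^3) + b*(r1+r2-r3-r4)) :=
        Finset.sum_congr rfl fun b _ => normS_pow_four q a b
    _ = ∑ r1 ∈ N, ∑ r2 ∈ N, ∑ r3 ∈ N, ∑ r4 ∈ N, ∑ b ∈ N,
          eq' q (a*(r1^3+r2^3-r3^3-r4^3) + b*(r1+r2-r3-r4)) := swap _
    _ = ∑ r1 ∈ N, ∑ r2 ∈ N, ∑ r3 ∈ N, (q:ℂ) * eq' q ((-3)*a*(r1-r3)*(r2-r3)*(r1+r2)) := by
        refine Finset.sum_congr rfl fun r1 h1 => Finset.sum_congr rfl fun r2 h2 =>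
          Finset.sum_congr rfl fun r3 h3 => ?_
        exact stepC r1 h1 r2 h2 r3 h3
    _ = (q:ℂ) * ∑ r1 ∈ N, ∑ r2 ∈ N, ∑ r3 ∈ N, eq' q ((-3)*a*(r1-r3)*(r2-r3)*(r1+r2)) := by
        simp only [← Finset.mul_sum]

lemma sum_sub_reindex (q : ℕ) (h : ℤ → ℂ) (r3 : ℤ) :
    ∑ r ∈ Finset.Icc (1:ℤ) q, h (r - r3) = ∑ x ∈ Finset.Icc (-r3 + 1) (-r3 + q), h x := by
  refine Finset.sum_nbij' (fun r => r - r3) (fun x => x + r3) ?_ ?_ ?_ ?_ ?_ <;>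
    intros r hr <;> simp_all only [Finset.mem_Icc] <;> first | omega | rfl

lemma sum_sub_periodic (q : ℕ) (h : ℤ → ℂ) (hper : ∀ x, h (x + q) = h x) (r3 : ℤ) :
    ∑ r ∈ Finset.Icc (1:ℤ) q, h (r - r3) = ∑ x ∈ Finset.Icc (1:ℤ) q, h x := by
  rw [sum_sub_reindex, periodic_sum_shift q h hper (-r3)]

lemma T_eq (q : ℕ) (hq : 1 ≤ q) (a : ℤ) :
    ∑ r1 ∈ Finset.Icc (1:ℤ) q, ∑ r2 ∈ Finset.Icc (1:ℤ) q, ∑ r3 ∈ Finset.Icc (1:ℤ) q,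
        eq' q ((-3)*a*(r1-r3)*(r2-r3)*(r1+r2))
      = ∑ u ∈ Finset.Icc (1:ℤ) q, ∑ v ∈ Finset.Icc (1:ℤ) q,
          eq' q ((-3)*a*u*v*(u+v)) * (if (q:ℤ) ∣ (-6)*a*u*v then (q:ℂ) else 0) := by
  set N := Finset.Icc (1:ℤ) q with hN
  have swap3 : ∀ f : ℤ→ℤ→ℤ→ℂ,
      (∑ x ∈ N, ∑ y ∈ N, ∑ z ∈ N, f x y z) = ∑ z ∈ N, ∑ x ∈ N, ∑ y ∈ N, f x y z := by
    intro f
    calc (∑ x ∈ N, ∑ y ∈ N, ∑ z ∈ N, f x y z)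
        = ∑ x ∈ N, ∑ z ∈ N, ∑ y ∈ N, f x y z :=
          Finset.sum_congr rfl fun x _ => Finset.sum_comm
      _ = ∑ z ∈ N, ∑ x ∈ N, ∑ y ∈ N, f x y z := Finset.sum_comm
  calc ∑ r1 ∈ N, ∑ r2 ∈ N, ∑ r3 ∈ N, eq' q ((-3)*a*(r1-r3)*(r2-r3)*(r1+r2))
      = ∑ r3 ∈ N, ∑ r1 ∈ N, ∑ r2 ∈ N, eq' q ((-3)*a*(r1-r3)*(r2-r3)*(r1+r2)) := swap3 _
    _ = ∑ r3 ∈ N, ∑ u ∈ N, ∑ v ∈ N, eq' q ((-3)*a*u*v*(u+v+2*r3)) := by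
        refine Finset.sum_congr rfl fun r3 _ => ?_
        have E1 : ∀ r1 : ℤ, (∑ r2 ∈ N, eq' q ((-3)*a*(r1-r3)*(r2-r3)*(r1+r2)))
            = ∑ v ∈ N, eq' q ((-3)*a*(r1-r3)*v*((r1-r3)+v+2*r3)) := by
          intro r1
          have hb : ∀ r2 ∈ N, eq' q ((-3)*a*(r1-r3)*(r2-r3)*(r1+r2))
              = (fun v => eq' q ((-3)*a*(r1-r3)*v*((r1-r3)+v+2*r3))) (r2 - r3) := by
            intro r2 _
            simp only
            congr 1
            ring
          rw [Finset.sum_congr rfl hb]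
          exact sum_sub_periodic q (fun v => eq' q ((-3)*a*(r1-r3)*v*((r1-r3)+v+2*r3)))
            (fun x => eq'_congr ⟨(-3)*a*(r1-r3)*(x + ((r1-r3)+x+2*r3) + q), by ring⟩) r3
        have E2 : (∑ r1 ∈ N, ∑ v ∈ N, eq' q ((-3)*a*(r1-r3)*v*((r1-r3)+v+2*r3)))
            = ∑ u ∈ N, ∑ v ∈ N, eq' q ((-3)*a*u*v*(u+v+2*r3)) := by
          have hb : ∀ r1 ∈ N, (∑ v ∈ N, eq' q ((-3)*a*(r1-r3)*v*((r1-r3)+v+2*r3)))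
              = (fun u => ∑ v ∈ N, eq' q ((-3)*a*u*v*(u+v+2*r3))) (r1 - r3) := fun r1 _ => rfl
          rw [Finset.sum_congr rfl hb]
          exact sum_sub_periodic q (fun u => ∑ v ∈ N, eq' q ((-3)*a*u*v*(u+v+2*r3)))
            (fun u => Finset.sum_congr rfl fun v _ => eq'_congr
              ⟨(-3)*a*v*(2*u+(q:ℤ)+v+2*r3), by ring⟩) r3
        rw [Finset.sum_congr rfl (fun r1 _ => E1 r1), E2]
    _ = ∑ u ∈ N, ∑ v ∈ N, ∑ r3 ∈ N, eq' q ((-3)*a*u*v*(u+v+2*r3)) := (swap3 _).symm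
    _ = ∑ u ∈ N, ∑ v ∈ N, eq' q ((-3)*a*u*v*(u+v)) * (if (q:ℤ) ∣ (-6)*a*u*v then (q:ℂ) else 0) := by
        refine Finset.sum_congr rfl fun u _ => Finset.sum_congr rfl fun v _ => ?_
        have hb : ∀ r3 ∈ N, eq' q ((-3)*a*u*v*(u+v+2*r3))
            = eq' q ((-3)*a*u*v*(u+v)) * eq' q (r3*((-6)*a*u*v)) := by
          intro r3 _
          rw [← eq'_add]
          congr 1
          ring
        rw [Finset.sum_congr rfl hb, ← Finset.mul_sum, hN, sum_eq'_mul q hq]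

lemma inner_sum_bound (q : ℕ) (hq : 1 ≤ q) (a : ℤ) (ha : Int.gcd a q = 1) (u : ℤ) :
    ∑ v ∈ Finset.Icc (1:ℤ) q, (if (q:ℤ) ∣ (-6)*a*u*v then (q:ℝ) else 0)
      ≤ (6 * Int.gcd u q : ℝ) * q := by
  have hco : IsCoprime (q:ℤ) a := by
    rw [Int.isCoprime_iff_gcd_eq_one, Int.gcd_comm]
    exact_mod_cast ha
  have hstep : ∀ v ∈ Finset.Icc (1:ℤ) q,
      (if (q:ℤ) ∣ (-6)*a*u*v then (q:ℝ) else 0) ≤ (if (q:ℤ) ∣ 6*u*v then (q:ℝ) else 0) := by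
    intro v _
    by_cases h : (q:ℤ) ∣ (-6)*a*u*v
    · have h' : (q:ℤ) ∣ a*(6*u*v) := by
        have h2 := h
        rwa [show (-6)*a*u*v = -(a*(6*u*v)) by ring, dvd_neg] at h2
      rw [if_pos h, if_pos (hco.dvd_of_dvd_mul_left h')]
    · rw [if_neg h]
      by_cases h2 : (q:ℤ) ∣ 6*u*v
      · rw [if_pos h2]; positivity
      · rw [if_neg h2]
  calc ∑ v ∈ Finset.Icc (1:ℤ) q, (if (q:ℤ) ∣ (-6)*a*u*v then (q:ℝ) else 0)
      ≤ ∑ v ∈ Finset.Icc (1:ℤ) q, (if (q:ℤ) ∣ 6*u*v then (q:ℝ) else 0) :=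
        Finset.sum_le_sum hstep
    _ = (((Finset.Icc (1:ℤ) q).filter (fun v => (q:ℤ) ∣ 6*u*v)).card : ℝ) * q := by
        rw [← Finset.sum_filter, Finset.sum_const, nsmul_eq_mul]
    _ ≤ (6 * Int.gcd u q : ℝ) * q := by
        apply mul_le_mul_of_nonneg_right _ (by positivity : (0:ℝ) ≤ q)
        exact_mod_cast card_filter_dvd_le q hq u

lemma gcd_sum_transfer (q : ℕ) (hq : 1 ≤ q) :
    ∑ u ∈ Finset.Icc (1:ℤ) q, (Int.gcd u q : ℝ) ≤ (q:ℝ) * q.divisors.card := by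
  have h1 : ∑ u ∈ Finset.Icc (1:ℤ) q, (Int.gcd u q : ℝ)
      = ∑ n ∈ Finset.Icc (1:ℕ) q, (Nat.gcd n q : ℝ) := by
    refine Finset.sum_nbij' (fun u => u.toNat) (fun n => (n:ℤ)) ?_ ?_ ?_ ?_ ?_
    · intro u hu; simp only [Finset.mem_Icc] at hu ⊢; omega
    · intro n hn; simp only [Finset.mem_Icc] at hn ⊢; omega
    · intro u hu; simp only [Finset.mem_Icc] at hu; show ((u.toNat : ℕ) : ℤ) = u; omega
    · intro n hn; simp
    · intro u hu
      simp only [Finset.mem_Icc] at hu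
      have h1 : Int.gcd u (q:ℤ) = Nat.gcd u.toNat q := by
        conv_lhs => rw [show u = ((u.toNat : ℕ) : ℤ) by omega]
        exact Int.gcd_natCast_natCast _ _
      rw [h1]
  rw [h1]
  have := sum_gcd_le q hq
  calc ∑ n ∈ Finset.Icc (1:ℕ) q, (Nat.gcd n q : ℝ)
      = ((∑ n ∈ Finset.Icc (1:ℕ) q, Nat.gcd n q : ℕ) : ℝ) := by push_cast; rfl
    _ ≤ ((q * q.divisors.card : ℕ) : ℝ) := by exact_mod_cast this
    _ = (q:ℝ) * q.divisors.card := by push_cast; rfl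

theorem stmt_5 :
    ∀ ε : ℝ, 0 < ε → ∃ C : ℝ, ∀ q : ℕ, 1 ≤ q → ∀ a : ℤ, Int.gcd a q = 1 →
      ∑ b ∈ Finset.Icc (1 : ℤ) q, ‖Ssum q a b‖^4 ≤ C * (q : ℝ) ^ ((3 : ℝ) + ε) := by
  intro ε hε
  obtain ⟨C₀, hC₀1, hC₀⟩ := card_divisors_le ε hε
  refine ⟨6 * C₀, ?_⟩
  intro q hq a ha
  set N := Finset.Icc (1:ℤ) q with hN
  have hq0 : (0:ℝ) < q := by exact_mod_cast hq
  -- the sum is nonnegative and its complexification is q * T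
  have hnonneg : (0:ℝ) ≤ ∑ b ∈ N, ‖Ssum q a b‖^4 :=
    Finset.sum_nonneg fun b _ => by positivity
  have hcx : ((∑ b ∈ N, ‖Ssum q a b‖^4 : ℝ) : ℂ)
      = (q:ℂ) * ∑ r1 ∈ N, ∑ r2 ∈ N, ∑ r3 ∈ N,
          eq' q ((-3)*a*(r1-r3)*(r2-r3)*(r1+r2)) := by
    push_cast
    rw [← sum_b_eq q hq a]
    push_cast
    rfl
  set T := ∑ r1 ∈ N, ∑ r2 ∈ N, ∑ r3 ∈ N, eq' q ((-3)*a*(r1-r3)*(r2-r3)*(r1+r2)) with hT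
  have hTnorm : ‖T‖ ≤ (q:ℝ) * (6 * ((q:ℝ) * q.divisors.card)) := by
    rw [hT, T_eq q hq a]
    calc ‖∑ u ∈ N, ∑ v ∈ N, eq' q ((-3)*a*u*v*(u+v))
            * (if (q:ℤ) ∣ (-6)*a*u*v then (q:ℂ) else 0)‖
        ≤ ∑ u ∈ N, ‖∑ v ∈ N, eq' q ((-3)*a*u*v*(u+v))
            * (if (q:ℤ) ∣ (-6)*a*u*v then (q:ℂ) else 0)‖ := norm_sum_le _ _
      _ ≤ ∑ u ∈ N, ∑ v ∈ N, ‖eq' q ((-3)*a*u*v*(u+v))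
            * (if (q:ℤ) ∣ (-6)*a*u*v then (q:ℂ) else 0)‖ :=
          Finset.sum_le_sum fun u _ => norm_sum_le _ _
      _ = ∑ u ∈ N, ∑ v ∈ N, (if (q:ℤ) ∣ (-6)*a*u*v then (q:ℝ) else 0) := by
          refine Finset.sum_congr rfl fun u _ => Finset.sum_congr rfl fun v _ => ?_
          rw [norm_mul, norm_eq', one_mul]
          by_cases h : (q:ℤ) ∣ (-6)*a*u*v
          · rw [if_pos h, if_pos h]; simp
          · rw [if_neg h, if_neg h]; simp
      _ ≤ ∑ u ∈ N, (6 * Int.gcd u q : ℝ) * q :=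
          Finset.sum_le_sum fun u _ => inner_sum_bound q hq a ha u
      _ = (∑ u ∈ N, (Int.gcd u q : ℝ)) * (6 * q) := by
          rw [Finset.sum_mul]
          refine Finset.sum_congr rfl fun u _ => ?_
          push_cast
          ring
      _ ≤ ((q:ℝ) * q.divisors.card) * (6 * q) := by
          apply mul_le_mul_of_nonneg_right (gcd_sum_transfer q hq) (by positivity)
      _ = (q:ℝ) * (6 * ((q:ℝ) * q.divisors.card)) := by ring
  have hmain : ∑ b ∈ N, ‖Ssum q a b‖^4 ≤ 6 * (q:ℝ)^3 * q.divisors.card := by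
    calc ∑ b ∈ N, ‖Ssum q a b‖^4
        = ‖((∑ b ∈ N, ‖Ssum q a b‖^4 : ℝ) : ℂ)‖ := by
          rw [Complex.norm_real, Real.norm_of_nonneg hnonneg]
      _ = ‖(q:ℂ) * T‖ := by rw [hcx]
      _ = (q:ℝ) * ‖T‖ := by rw [norm_mul, Complex.norm_natCast]
      _ ≤ (q:ℝ) * ((q:ℝ) * (6 * ((q:ℝ) * q.divisors.card))) :=
          mul_le_mul_of_nonneg_left hTnorm (by positivity)
      _ = 6 * (q:ℝ)^3 * q.divisors.card := by ring
  have hdiv := hC₀ q hq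
  calc ∑ b ∈ N, ‖Ssum q a b‖^4
      ≤ 6 * (q:ℝ)^3 * q.divisors.card := hmain
    _ ≤ 6 * (q:ℝ)^3 * (C₀ * (q:ℝ) ^ ε) := by
        apply mul_le_mul_of_nonneg_left hdiv (by positivity)
    _ = 6 * C₀ * ((q:ℝ)^3 * (q:ℝ) ^ ε) := by ring
    _ = 6 * C₀ * (q:ℝ) ^ ((3:ℝ) + ε) := by
        rw [Real.rpow_add hq0]
        congr 2
        rw [show ((3:ℝ)) = ((3:ℕ):ℝ) by norm_num, Real.rpow_natCast]
end

section
/- For a natural number $q\ge 1$ and an integer $a$ with $\gcd(a,q)=1$, the number of pairs $(u,v)$ of residues modulo $q$ such that $q$ divides $6uv$ is $O_\varepsilon(q^{1+\varepsilon})$ for every $\varepsilon>0$. -/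
-- e^x ≥ x^2/4 for x ≥ 0
lemma exp_ge_sq (x : ℝ) (hx : 0 ≤ x) : x^2/4 ≤ Real.exp x := by
  have h := Real.add_one_le_exp (x/2)
  have h2 : Real.exp x = Real.exp (x/2) * Real.exp (x/2) := by
    rw [← Real.exp_add]; ring_nf
  nlinarith [Real.exp_pos (x/2)]

lemma term_small (ε : ℝ) (hε : 0 < ε) (p k : ℕ) (hp : 2 ≤ p) :
    ((k:ℝ) + 1) ≤ max 1 (8/(ε*Real.log 2)^2) * (p:ℝ) ^ ((k:ℝ)*ε) := by
  set B := max 1 (8/(ε*Real.log 2)^2) with hB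
  have hB1 : (1:ℝ) ≤ B := le_max_left _ _
  have hl2 : 0 < Real.log 2 := Real.log_pos (by norm_num)
  have hpε : (2:ℝ) ^ ((k:ℝ)*ε) ≤ (p:ℝ) ^ ((k:ℝ)*ε) := by
    apply Real.rpow_le_rpow (by norm_num) (by exact_mod_cast hp)
    positivity
  have h2e : (2:ℝ) ^ ((k:ℝ)*ε) = Real.exp ((k:ℝ)*ε*Real.log 2) := by
    rw [Real.rpow_def_of_pos (by norm_num)]; ring_nf
  rcases Nat.eq_zero_or_pos k with hk | hk
  · subst hk
    simp only [Nat.cast_zero, zero_add, zero_mul, Real.rpow_zero, mul_one]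
    linarith
  · have hk1 : (1:ℝ) ≤ k := by exact_mod_cast hk
    have hBge : 8/(ε*Real.log 2)^2 ≤ B := le_max_right _ _
    have hexp : ((k:ℝ)*ε*Real.log 2)^2/4 ≤ Real.exp ((k:ℝ)*ε*Real.log 2) := by
      apply exp_ge_sq; positivity
    have hεl : 0 < (ε*Real.log 2)^2 := by positivity
    have key : (k:ℝ) + 1 ≤ B * Real.exp ((k:ℝ)*ε*Real.log 2) := by
      have hBe : 8/(ε*Real.log 2)^2 * (((k:ℝ)*ε*Real.log 2)^2/4) ≤
          B * Real.exp ((k:ℝ)*ε*Real.log 2) := by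
        apply mul_le_mul hBge hexp (by positivity)
        linarith
      have : 8/(ε*Real.log 2)^2 * (((k:ℝ)*ε*Real.log 2)^2/4) = 2*(k:ℝ)^2 := by
        field_simp; ring
      rw [this] at hBe
      nlinarith
    calc (k:ℝ) + 1 ≤ B * Real.exp ((k:ℝ)*ε*Real.log 2) := key
      _ = B * (2:ℝ) ^ ((k:ℝ)*ε) := by rw [h2e]
      _ ≤ B * (p:ℝ) ^ ((k:ℝ)*ε) := by
          apply mul_le_mul_of_nonneg_left hpε (by linarith)

lemma term_large (ε : ℝ) (hε : 0 < ε) (p k : ℕ) (hp : (2:ℝ) ≤ (p:ℝ)^ε) :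
    ((k:ℝ) + 1) ≤ (p:ℝ) ^ ((k:ℝ)*ε) := by
  have hp0 : (0:ℝ) ≤ p := by
    by_contra h
    push_neg at h
    exact absurd (Nat.cast_nonneg p) (not_le.mpr h)
  have : (p:ℝ) ^ ((k:ℝ)*ε) = ((p:ℝ)^ε)^(k:ℕ) := by
    rw [← Real.rpow_natCast ((p:ℝ)^ε) k, ← Real.rpow_mul hp0, mul_comm]
  rw [this]
  calc ((k:ℝ) + 1) ≤ (2:ℝ)^(k:ℕ) := by
        have := Nat.lt_two_pow_self (n := k)
        have : (k:ℝ) + 1 ≤ (2^k : ℕ) := by exact_mod_cast this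
        simpa using this
    _ ≤ ((p:ℝ)^ε)^(k:ℕ) := by
        apply pow_le_pow_left₀ (by norm_num) hp

lemma divBound (ε : ℝ) (hε : 0 < ε) : ∃ C : ℝ, 1 ≤ C ∧ ∀ n : ℕ, 1 ≤ n →
    (n.divisors.card : ℝ) ≤ C * (n : ℝ) ^ ε := by
  classical
  set B := max 1 (8/(ε*Real.log 2)^2) with hBdef
  have hB1 : (1:ℝ) ≤ B := le_max_left _ _
  set N : ℕ := ⌈(2:ℝ)^(1/ε)⌉₊ with hN
  refine ⟨B ^ N, one_le_pow₀ hB1, ?_⟩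
  intro n hn
  have hn0 : n ≠ 0 := by omega
  rw [Nat.card_divisors hn0]
  -- n as product over prime factors
  have hnprod : (n:ℝ) = ∏ p ∈ n.primeFactors, (p:ℝ) ^ (n.factorization p : ℕ) := by
    conv_lhs => rw [← Nat.factorization_prod_pow_eq_self hn0]
    rw [Nat.prod_factorization_eq_prod_primeFactors]
    push_cast
    rfl
  have hrpow : (n:ℝ) ^ ε = ∏ p ∈ n.primeFactors, (p:ℝ) ^ ((n.factorization p : ℝ) * ε) := by
    rw [hnprod, ← Real.finset_prod_rpow _ _ (fun p _ => by positivity)]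
    refine Finset.prod_congr rfl (fun p _ => ?_)
    rw [← Real.rpow_natCast (p:ℝ) (n.factorization p), ← Real.rpow_mul (Nat.cast_nonneg p)]
  rw [hrpow]
  -- termwise bound with weights
  have hterm : ∀ p ∈ n.primeFactors,
      ((n.factorization p : ℝ) + 1) ≤
        (if p ≤ N then B else 1) * (p:ℝ) ^ ((n.factorization p : ℝ) * ε) := by
    intro p hp
    have hpp : p.Prime := Nat.prime_of_mem_primeFactors hp
    by_cases hpN : p ≤ N
    · simp only [hpN, if_true]
      exact term_small ε hε p _ hpp.two_le
    · simp only [hpN, if_false, one_mul]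
      apply term_large ε hε
      push_neg at hpN
      have h2N : (2:ℝ)^(1/ε) ≤ (p:ℝ) := by
        calc (2:ℝ)^(1/ε) ≤ (N:ℝ) := Nat.le_ceil _
          _ ≤ (p:ℝ) := by exact_mod_cast hpN.le
      calc (2:ℝ) = ((2:ℝ)^(1/ε))^ε := by
            rw [← Real.rpow_mul (by norm_num), one_div_mul_cancel hε.ne', Real.rpow_one]
        _ ≤ (p:ℝ)^ε := Real.rpow_le_rpow (by positivity) h2N hε.le
  have hcast : ((∏ p ∈ n.primeFactors, (n.factorization p + 1) : ℕ) : ℝ)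
      = ∏ p ∈ n.primeFactors, ((n.factorization p : ℝ) + 1) := by
    push_cast; rfl
  rw [hcast]
  calc ∏ p ∈ n.primeFactors, ((n.factorization p : ℝ) + 1)
      ≤ ∏ p ∈ n.primeFactors,
          ((if p ≤ N then B else 1) * (p:ℝ) ^ ((n.factorization p : ℝ) * ε)) := by
        apply Finset.prod_le_prod (fun p _ => by positivity) hterm
    _ = (∏ p ∈ n.primeFactors, (if p ≤ N then B else 1)) *
          ∏ p ∈ n.primeFactors, (p:ℝ) ^ ((n.factorization p : ℝ) * ε) :=
        Finset.prod_mul_distrib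
    _ ≤ B ^ N * ∏ p ∈ n.primeFactors, (p:ℝ) ^ ((n.factorization p : ℝ) * ε) := by
        apply mul_le_mul_of_nonneg_right _ (Finset.prod_nonneg (fun p _ => by positivity))
        have heq : (∏ p ∈ n.primeFactors, (if p ≤ N then B else 1))
            = B ^ ((n.primeFactors.filter (· ≤ N)).card) := by
          rw [Finset.prod_ite, Finset.prod_const, Finset.prod_const, one_pow, mul_one]
        rw [heq]
        apply pow_le_pow_right₀ hB1
        calc (n.primeFactors.filter (· ≤ N)).card ≤ (Finset.Icc 1 N).card := by
              apply Finset.card_le_card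
              intro p hp
              simp only [Finset.mem_filter] at hp
              exact Finset.mem_Icc.mpr ⟨(Nat.prime_of_mem_primeFactors hp.1).one_lt.le, hp.2⟩
          _ = N := by rw [Nat.card_Icc]; omega

-- number of multiples of d below q, when d ∣ q, is ≤ q / d
lemma mult_count (q d : ℕ) (hd : 0 < d) (hdq : d ∣ q) :
    ((Finset.range q).filter (d ∣ ·)).card ≤ q / d := by
  have : ((Finset.range q).filter (d ∣ ·)).card ≤ (Finset.range (q / d)).card := by
    apply Finset.card_le_card_of_injOn (· / d)
    · intro u hu
      simp only [Finset.mem_coe, Finset.mem_filter, Finset.mem_range] at hu ⊢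
      exact Nat.div_lt_div_of_lt_of_dvd hdq hu.1
    · intro u hu v hv huv
      simp only [Finset.mem_filter, Finset.mem_range, Finset.coe_filter, Set.mem_setOf_eq] at hu hv
      have h1 := Nat.div_mul_cancel hu.2
      have h2 := Nat.div_mul_cancel hv.2
      dsimp at huv
      rw [← h1, ← h2, huv]
  simpa using this

-- inner count: number of v < q with q ∣ a * v is ≤ gcd a q
lemma inner_count (q a : ℕ) (hq : 1 ≤ q) :
    ((Finset.range q).filter (fun v => q ∣ a * v)).card ≤ Nat.gcd a q := by
  set g := Nat.gcd a q with hg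
  have hg0 : 0 < g := Nat.gcd_pos_of_pos_right a hq
  set m := q / g with hm
  have hgq : g ∣ q := Nat.gcd_dvd_right a q
  have hmq : m ∣ q := Nat.div_dvd_of_dvd hgq
  have hm0 : 0 < m := Nat.div_pos (Nat.le_of_dvd hq hgq) hg0
  have hsub : (Finset.range q).filter (fun v => q ∣ a * v) ⊆
      (Finset.range q).filter (m ∣ ·) := by
    intro v hv
    simp only [Finset.mem_filter] at hv ⊢
    refine ⟨hv.1, ?_⟩
    have hco : Nat.Coprime m (a / g) := (Nat.coprime_div_gcd_div_gcd hg0).symm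
    have hdvd : m ∣ (a / g) * v := by
      have hga : g ∣ a := Nat.gcd_dvd_left a q
      have h1 : q ∣ a * v := hv.2
      have h2 : g * m = q := Nat.mul_div_cancel' hgq
      have h3 : g * (a / g) = a := Nat.mul_div_cancel' hga
      have : g * m ∣ g * ((a / g) * v) := by
        rw [h2, ← mul_assoc, h3]; exact h1
      exact (mul_dvd_mul_iff_left hg0.ne').mp this
    exact hco.dvd_of_dvd_mul_left hdvd
  calc ((Finset.range q).filter (fun v => q ∣ a * v)).card
      ≤ ((Finset.range q).filter (m ∣ ·)).card := Finset.card_le_card hsub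
    _ ≤ q / m := mult_count q m hm0 hmq
    _ = g := by
        rw [hm, Nat.div_div_self hgq (by omega)]

lemma gcd_sum (q : ℕ) (hq : 1 ≤ q) :
    (∑ u ∈ Finset.range q, Nat.gcd u q) ≤ q * q.divisors.card := by
  have step1 : ∀ u, Nat.gcd u q ≤ ∑ d ∈ q.divisors.filter (· ∣ u), d := by
    intro u
    apply Finset.single_le_sum (f := fun d => d) (fun d _ => Nat.zero_le d)
    simp only [Finset.mem_filter, Nat.mem_divisors]
    exact ⟨⟨Nat.gcd_dvd_right u q, by omega⟩, Nat.gcd_dvd_left u q⟩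
  calc (∑ u ∈ Finset.range q, Nat.gcd u q)
      ≤ ∑ u ∈ Finset.range q, ∑ d ∈ q.divisors.filter (· ∣ u), d :=
        Finset.sum_le_sum (fun u _ => step1 u)
    _ = ∑ u ∈ Finset.range q, ∑ d ∈ q.divisors, if d ∣ u then d else 0 := by
        refine Finset.sum_congr rfl (fun u _ => ?_)
        rw [Finset.sum_filter]
    _ = ∑ d ∈ q.divisors, ∑ u ∈ Finset.range q, if d ∣ u then d else 0 :=
        Finset.sum_comm
    _ = ∑ d ∈ q.divisors, ((Finset.range q).filter (d ∣ ·)).card * d := by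
        refine Finset.sum_congr rfl (fun d _ => ?_)
        rw [← Finset.sum_filter, Finset.sum_const, smul_eq_mul]
    _ ≤ ∑ d ∈ q.divisors, q := by
        refine Finset.sum_le_sum (fun d hd => ?_)
        rw [Nat.mem_divisors] at hd
        have hd0 : 0 < d := Nat.pos_of_dvd_of_pos hd.1 hq
        calc ((Finset.range q).filter (d ∣ ·)).card * d ≤ (q / d) * d :=
              Nat.mul_le_mul_right d (mult_count q d hd0 hd.1)
          _ = q := Nat.div_mul_cancel hd.1
    _ = q * q.divisors.card := by rw [Finset.sum_const, smul_eq_mul, Nat.mul_comm]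

lemma prod_count (q : ℕ) (hq : 1 ≤ q) :
    (((Finset.range q ×ˢ Finset.range q).filter
        (fun p => q ∣ 6 * p.1 * p.2)).card : ℕ)
      ≤ ∑ u ∈ Finset.range q, ((Finset.range q).filter (fun v => q ∣ 6 * u * v)).card := by
  rw [Finset.card_eq_sum_card_fiberwise
    (f := Prod.fst) (t := Finset.range q)
    (fun p hp => (Finset.mem_filter.mp hp).1 |> Finset.mem_product.mp |>.1)]
  refine Finset.sum_le_sum (fun u _ => ?_)
  apply Finset.card_le_card_of_injOn Prod.snd
  · intro p hp
    simp only [Finset.mem_coe, Finset.mem_filter, Finset.mem_product, Finset.mem_range] at hp ⊢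
    obtain ⟨⟨⟨h1, h2⟩, h3⟩, h4⟩ := hp
    exact ⟨h2, h4 ▸ h3⟩
  · intro p hp p' hp' hpp
    simp only [Finset.coe_filter, Set.mem_setOf_eq, Finset.mem_filter] at hp hp'
    have : p.1 = p'.1 := by rw [hp.2, hp'.2]
    exact Prod.ext this hpp

theorem stmt_7 :
    ∀ ε : ℝ, 0 < ε → ∃ C : ℝ, ∀ q : ℕ, 1 ≤ q → ∀ a : ℤ, Int.gcd a q = 1 →
      (((Finset.range q ×ˢ Finset.range q).filter
          (fun p => q ∣ 6 * p.1 * p.2)).card : ℝ)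
        ≤ C * (q : ℝ) ^ ((1 : ℝ) + ε) := by
  intro ε hε
  obtain ⟨C, hC1, hC⟩ := divBound ε hε
  refine ⟨6 * C, fun q hq a _ => ?_⟩
  have hnat : (((Finset.range q ×ˢ Finset.range q).filter
      (fun p => q ∣ 6 * p.1 * p.2)).card : ℕ) ≤ 6 * (q * q.divisors.card) := by
    calc (((Finset.range q ×ˢ Finset.range q).filter
        (fun p => q ∣ 6 * p.1 * p.2)).card : ℕ)
        ≤ ∑ u ∈ Finset.range q, ((Finset.range q).filter (fun v => q ∣ 6 * u * v)).card :=
          prod_count q hq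
      _ ≤ ∑ u ∈ Finset.range q, Nat.gcd (6 * u) q :=
          Finset.sum_le_sum (fun u _ => inner_count q (6 * u) hq)
      _ ≤ ∑ u ∈ Finset.range q, 6 * Nat.gcd u q := by
          refine Finset.sum_le_sum (fun u _ => ?_)
          have hdvd : Nat.gcd (6 * u) q ∣ 6 * Nat.gcd u q := by
            rw [← Nat.gcd_mul_left]
            exact Nat.gcd_dvd_gcd_of_dvd_right _ (dvd_mul_left q 6)
          exact Nat.le_of_dvd (by have := Nat.gcd_pos_of_pos_right u hq; omega) hdvd
      _ = 6 * ∑ u ∈ Finset.range q, Nat.gcd u q := by rw [Finset.mul_sum]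
      _ ≤ 6 * (q * q.divisors.card) := Nat.mul_le_mul_left 6 (gcd_sum q hq)
  have hq0 : (0:ℝ) < q := by exact_mod_cast hq
  have hτ : (q.divisors.card : ℝ) ≤ C * (q:ℝ) ^ ε := hC q hq
  calc (((Finset.range q ×ˢ Finset.range q).filter
      (fun p => q ∣ 6 * p.1 * p.2)).card : ℝ)
      ≤ 6 * ((q:ℝ) * (q.divisors.card : ℝ)) := by exact_mod_cast hnat
    _ ≤ 6 * ((q:ℝ) * (C * (q:ℝ) ^ ε)) := by
        apply mul_le_mul_of_nonneg_left _ (by norm_num)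
        exact mul_le_mul_of_nonneg_left hτ hq0.le
    _ = 6 * C * (q : ℝ) ^ ((1 : ℝ) + ε) := by
        rw [Real.rpow_add hq0, Real.rpow_one]; ring
end
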